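/- arXiv:2208.05555 — 2 statements merged into one kernel-verified Lean document; each statement's English description precedes it below -/
import Mathlib

section
/- Let T be a transfer system on a finite group G (a partial order on subgroups refining inclusion, closed under conjugation and intersection). If K ≤_T H for subgroups K ≤ H ≤ G, then core_G(K) ≤_T core_G(H), where core_G(A) is the intersection of all G-conjugates of A. In particular if H ≤_T G then core_G(H) ≤_T G. -/
/-- A transfer system on a finite group `G`. -/
structure TransferSystem (G : Type*) [Group G] where
  rel : Subgroup G → Subgroup G → Prop
  rel_refl : ∀ H : Subgroup G, rel H H
  rel_trans : ∀ {K L M : Subgroup G}, rel K L → rel L M → rel K M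
  rel_antisymm : ∀ {K L : Subgroup G}, rel K L → rel L K → K = L
  le_of_rel : ∀ {K H : Subgroup G}, rel K H → K ≤ H
  conj_closed : ∀ {K H : Subgroup G} (g : G), rel K H →
    rel (K.map (MulAut.conj g).toMonoidHom) (H.map (MulAut.conj g).toMonoidHom)
  inter_closed : ∀ {K H : Subgroup G} (L : Subgroup G), rel K H → rel (K ⊓ L) (H ⊓ L)

/-- The core of a subgroup: the intersection of all its conjugates. -/
def coreG {G : Type*} [Group G] (A : Subgroup G) : Subgroup G :=
  ⨅ g : G, A.map (MulAut.conj g).toMonoidHom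

lemma rel_inf {G : Type*} [Group G] (T : TransferSystem G) {A B C D : Subgroup G}
    (h1 : T.rel A B) (h2 : T.rel C D) : T.rel (A ⊓ C) (B ⊓ D) := by
  have h3 : T.rel (A ⊓ C) (B ⊓ C) := T.inter_closed C h1
  have h4 : T.rel (C ⊓ B) (D ⊓ B) := T.inter_closed B h2
  rw [inf_comm C B, inf_comm D B] at h4
  exact T.rel_trans h3 h4

/-- If `K ≤_T H` then `core_G(K) ≤_T core_G(H)`; in particular if `H ≤_T G` then
`core_G(H) ≤_T G`. -/
theorem stmt4 {G : Type*} [Group G] [Finite G] (T : TransferSystem G) :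
    (∀ K H : Subgroup G, T.rel K H → T.rel (coreG K) (coreG H)) ∧
    (∀ H : Subgroup G, T.rel H ⊤ → T.rel (coreG H) ⊤) := by
  cases nonempty_fintype G
  have main : ∀ K H : Subgroup G, T.rel K H → T.rel (coreG K) (coreG H) := by
    intro K H hKH
    classical
    have key : ∀ s : Finset G,
        T.rel (s.inf fun g => K.map (MulAut.conj g).toMonoidHom)
              (s.inf fun g => H.map (MulAut.conj g).toMonoidHom) := by
      intro s
      induction s using Finset.induction_on with
      | empty => simpa using T.rel_refl ⊤
      | insert _ _ hx ih =>
        rw [Finset.inf_insert, Finset.inf_insert]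
        exact rel_inf T (T.conj_closed _ hKH) ih
    have hcore : ∀ A : Subgroup G,
        coreG A = (Finset.univ.inf fun g => A.map (MulAut.conj g).toMonoidHom) := by
      intro A
      rw [Finset.inf_eq_iInf]
      simp [coreG]
    rw [hcore K, hcore H]
    exact key Finset.univ
  refine ⟨main, fun H hH => ?_⟩
  have h1 : T.rel (coreG H) (coreG ⊤) := main H ⊤ hH
  have h2 : coreG (⊤ : Subgroup G) = ⊤ := by
    apply le_antisymm le_top
    refine le_iInf fun g => ?_
    intro x _
    exact ⟨g⁻¹ * x * g, trivial, by simp [MulAut.conj]; group⟩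
  rwa [h2] at h1
end

section
/- Let G be a finite group. Define the pair of transfer systems (T₁, T₂) on C₂ × C₂ by: T₂ is generated by the relations e ≤ C₂×e, e ≤ e×C₂, e ≤ Δ, e×C₂ ≤ C₂×C₂ (with Δ the diagonal subgroup), together with everything forced by reflexivity, transitivity, conjugation, and intersection closure; and T₁ consists of e ≤ C₂×e, e ≤ Δ, e×C₂ ≤ C₂×C₂ plus reflexivity. Show that the compatibility condition fails: taking A = C₂×C₂, B = e×C₂, C = Δ, one has B ≤_{T₁} A and B∩C = e ≤_{T₂} B, but C = Δ is not ≤_{T₂} A = C₂×C₂. -/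
/-- The Klein four group `C₂ × C₂`. -/
abbrev V4 := ZMod 2 × ZMod 2

/-- The subgroup `C₂ × e`. -/
def P10 : AddSubgroup V4 := (⊤ : AddSubgroup (ZMod 2)).prod ⊥

/-- The subgroup `e × C₂`. -/
def P01 : AddSubgroup V4 := (⊥ : AddSubgroup (ZMod 2)).prod ⊤

/-- The diagonal subgroup `Δ`. -/
def Δ' : AddSubgroup V4 := ((AddMonoidHom.id (ZMod 2)).prod (AddMonoidHom.id (ZMod 2))).range

/-- A transfer system on the (abelian) group `C₂ × C₂`: a partial order on subgroups
refining inclusion and closed under intersection (conjugation closure is automatic). -/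
def IsTS (r : AddSubgroup V4 → AddSubgroup V4 → Prop) : Prop :=
  (∀ K, r K K) ∧ (∀ K L M, r K L → r L M → r K M) ∧
  (∀ K L, r K L → K ≤ L) ∧ (∀ K L M, r K L → r (K ⊓ M) (L ⊓ M))

/-- The transfer system `T₁`: `e ≤ C₂×e`, `e ≤ Δ`, `e×C₂ ≤ C₂×C₂` plus reflexivity. -/
def T1 : AddSubgroup V4 → AddSubgroup V4 → Prop := fun K H =>
  K = H ∨ (K = ⊥ ∧ H = P10) ∨ (K = ⊥ ∧ H = Δ') ∨ (K = P01 ∧ H = ⊤)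

/-- The transfer system `T₂` generated by `e ≤ C₂×e`, `e ≤ e×C₂`, `e ≤ Δ`,
`e×C₂ ≤ C₂×C₂`, i.e. the smallest transfer system containing these relations. -/
def T2 : AddSubgroup V4 → AddSubgroup V4 → Prop := fun K H =>
  ∀ r : AddSubgroup V4 → AddSubgroup V4 → Prop, IsTS r →
    r ⊥ P10 → r ⊥ P01 → r ⊥ Δ' → r P01 ⊤ → r K H

lemma mem_P10 (x : V4) : x ∈ P10 ↔ x.2 = 0 := by
  simp [P10, AddSubgroup.mem_prod, AddSubgroup.mem_bot]

lemma mem_P01 (x : V4) : x ∈ P01 ↔ x.1 = 0 := by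
  simp [P01, AddSubgroup.mem_prod, AddSubgroup.mem_bot]

lemma mem_Δ' (x : V4) : x ∈ Δ' ↔ x.1 = x.2 := by
  simp [Δ', AddMonoidHom.mem_range, AddMonoidHom.prod_apply, Prod.ext_iff]

lemma elem_cases (x : V4) : x = (0,0) ∨ x = (1,0) ∨ x = (0,1) ∨ x = (1,1) := by
  revert x; decide

lemma classify (M : AddSubgroup V4) : M = ⊥ ∨ M = P10 ∨ M = P01 ∨ M = Δ' ∨ M = ⊤ := by
  by_cases h10 : ((1:ZMod 2),(0:ZMod 2)) ∈ M <;>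
  by_cases h01 : ((0:ZMod 2),(1:ZMod 2)) ∈ M <;>
  by_cases h11 : ((1:ZMod 2),(1:ZMod 2)) ∈ M
  · right; right; right; right
    refine le_antisymm le_top fun x _ => ?_
    rcases elem_cases x with h|h|h|h <;> subst h
    exacts [M.zero_mem, h10, h01, h11]
  · exact absurd (by have := M.add_mem h10 h01; simpa using this) h11
  · exact absurd (by have := M.add_mem h10 h11; simpa [show (1:ZMod 2) + 1 = 0 by decide] using this) h01
  · right; left
    refine le_antisymm (fun x hx => ?_) (fun x hx => ?_)
    · rw [mem_P10]
      rcases elem_cases x with h|h|h|h <;> subst h <;> first | rfl | exact absurd hx (by assumption)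
    · rw [mem_P10] at hx
      rcases elem_cases x with h|h|h|h <;> subst h <;>
        first | exact M.zero_mem | exact h10 | simp at hx
  · exact absurd (by have := M.add_mem h01 h11; simpa [show (1:ZMod 2) + 1 = 0 by decide] using this) h10
  · right; right; left
    refine le_antisymm (fun x hx => ?_) (fun x hx => ?_)
    · rw [mem_P01]
      rcases elem_cases x with h|h|h|h <;> subst h <;> first | rfl | exact absurd hx (by assumption)
    · rw [mem_P01] at hx
      rcases elem_cases x with h|h|h|h <;> subst h <;>
        first | exact M.zero_mem | exact h01 | simp at hx
  · right; right; right; left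
    refine le_antisymm (fun x hx => ?_) (fun x hx => ?_)
    · rw [mem_Δ']
      rcases elem_cases x with h|h|h|h <;> subst h <;> first | rfl | exact absurd hx (by assumption)
    · rw [mem_Δ'] at hx
      rcases elem_cases x with h|h|h|h <;> subst h <;>
        first | exact M.zero_mem | exact h11 | simp at hx
  · left
    refine le_antisymm (fun x hx => ?_) bot_le
    rcases elem_cases x with h|h|h|h <;> subst h <;>
      first | exact absurd hx (by assumption) | simp

-- distinctness
lemma P10_ne_bot : P10 ≠ ⊥ := fun h => by
  have : ((1,0):V4) ∈ P10 := (mem_P10 _).2 rfl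
  rw [h] at this; simp [Prod.ext_iff] at this
lemma P01_ne_bot : P01 ≠ ⊥ := fun h => by
  have : ((0,1):V4) ∈ P01 := (mem_P01 _).2 rfl
  rw [h] at this; simp [Prod.ext_iff] at this
lemma Δ'_ne_bot : Δ' ≠ ⊥ := fun h => by
  have : ((1,1):V4) ∈ Δ' := (mem_Δ' _).2 rfl
  rw [h] at this; simp [Prod.ext_iff] at this
lemma P10_ne_top : P10 ≠ ⊤ := fun h => by
  have : ((0,1):V4) ∈ P10 := h ▸ AddSubgroup.mem_top _
  rw [mem_P10] at this; simp at this
lemma P01_ne_top : P01 ≠ ⊤ := fun h => by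
  have : ((1,0):V4) ∈ P01 := h ▸ AddSubgroup.mem_top _
  rw [mem_P01] at this; simp at this
lemma Δ'_ne_top : Δ' ≠ ⊤ := fun h => by
  have : ((1,0):V4) ∈ Δ' := h ▸ AddSubgroup.mem_top _
  rw [mem_Δ'] at this; simp at this
lemma P10_ne_P01 : P10 ≠ P01 := fun h => by
  have : ((1,0):V4) ∈ P01 := h ▸ (mem_P10 _).2 rfl
  rw [mem_P01] at this; simp at this
lemma P10_ne_Δ' : P10 ≠ Δ' := fun h => by
  have : ((1,0):V4) ∈ Δ' := h ▸ (mem_P10 _).2 rfl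
  rw [mem_Δ'] at this; simp at this
lemma P01_ne_Δ' : P01 ≠ Δ' := fun h => by
  have : ((0,1):V4) ∈ Δ' := h ▸ (mem_P01 _).2 rfl
  rw [mem_Δ'] at this; simp at this

-- intersections
lemma inf_eq_bot_of (M N : AddSubgroup V4)
    (h : ∀ x : V4, x ∈ M → x ∈ N → x = 0) : M ⊓ N = ⊥ := by
  refine le_antisymm (fun x hx => ?_) bot_le
  rw [AddSubgroup.mem_bot]
  exact h x hx.1 hx.2

lemma P01_inf_P10 : P01 ⊓ P10 = ⊥ := by
  apply inf_eq_bot_of; intro x h1 h2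
  rw [mem_P01] at h1; rw [mem_P10] at h2
  exact Prod.ext h1 h2
lemma P01_inf_Δ' : P01 ⊓ Δ' = ⊥ := by
  apply inf_eq_bot_of; intro x h1 h2
  rw [mem_P01] at h1; rw [mem_Δ'] at h2
  exact Prod.ext h1 (h2 ▸ h1)
lemma P10_inf_P01 : P10 ⊓ P01 = ⊥ := by rw [inf_comm]; exact P01_inf_P10
lemma P10_inf_Δ' : P10 ⊓ Δ' = ⊥ := by
  apply inf_eq_bot_of; intro x h1 h2
  rw [mem_P10] at h1; rw [mem_Δ'] at h2
  exact Prod.ext (h2.trans h1) h1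
lemma Δ'_inf_P10 : Δ' ⊓ P10 = ⊥ := by rw [inf_comm]; exact P10_inf_Δ'
lemma Δ'_inf_P01 : Δ' ⊓ P01 = ⊥ := by rw [inf_comm]; exact P01_inf_Δ'

lemma top_ne_bot' : (⊤ : AddSubgroup V4) ≠ ⊥ :=
  fun h => P01_ne_bot (le_antisymm (h ▸ le_top) bot_le)

lemma P10_inf_cases (M : AddSubgroup V4) : P10 ⊓ M = ⊥ ∨ P10 ⊓ M = P10 := by
  rcases classify M with rfl | rfl | rfl | rfl | rfl
  · left; simp
  · right; exact inf_idem _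
  · left; exact P10_inf_P01
  · left; exact P10_inf_Δ'
  · right; simp

lemma Δ'_inf_cases (M : AddSubgroup V4) : Δ' ⊓ M = ⊥ ∨ Δ' ⊓ M = Δ' := by
  rcases classify M with rfl | rfl | rfl | rfl | rfl
  · left; simp
  · left; exact Δ'_inf_P10
  · left; exact Δ'_inf_P01
  · right; exact inf_idem _
  · right; simp

lemma isTS_T1 : IsTS T1 := by
  refine ⟨fun K => Or.inl rfl, ?_, ?_, ?_⟩
  · intro K L M h1 h2
    rcases h1 with rfl | ⟨rfl, rfl⟩ | ⟨rfl, rfl⟩ | ⟨rfl, rfl⟩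
    · exact h2
    · rcases h2 with rfl | ⟨h, rfl⟩ | ⟨h, rfl⟩ | ⟨h, rfl⟩
      · exact Or.inr (Or.inl ⟨rfl, rfl⟩)
      · exact absurd h P10_ne_bot
      · exact absurd h P10_ne_bot
      · exact absurd h P10_ne_P01
    · rcases h2 with rfl | ⟨h, rfl⟩ | ⟨h, rfl⟩ | ⟨h, rfl⟩
      · exact Or.inr (Or.inr (Or.inl ⟨rfl, rfl⟩))
      · exact absurd h Δ'_ne_bot
      · exact absurd h Δ'_ne_bot
      · exact absurd h (fun hh => P01_ne_Δ' hh.symm)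
    · rcases h2 with rfl | ⟨h, rfl⟩ | ⟨h, rfl⟩ | ⟨h, rfl⟩
      · exact Or.inr (Or.inr (Or.inr ⟨rfl, rfl⟩))
      · exact absurd h top_ne_bot'
      · exact absurd h top_ne_bot'
      · exact absurd h (fun hh => P01_ne_top hh.symm)
  · intro K L h
    rcases h with rfl | ⟨rfl, rfl⟩ | ⟨rfl, rfl⟩ | ⟨rfl, rfl⟩
    exacts [le_rfl, bot_le, bot_le, le_top]
  · intro K L M h
    rcases h with rfl | ⟨rfl, rfl⟩ | ⟨rfl, rfl⟩ | ⟨rfl, rfl⟩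
    · exact Or.inl rfl
    · rw [bot_inf_eq]
      rcases P10_inf_cases M with h | h <;> rw [h]
      · exact Or.inl rfl
      · exact Or.inr (Or.inl ⟨rfl, rfl⟩)
    · rw [bot_inf_eq]
      rcases Δ'_inf_cases M with h | h <;> rw [h]
      · exact Or.inl rfl
      · exact Or.inr (Or.inr (Or.inl ⟨rfl, rfl⟩))
    · rw [top_inf_eq]
      rcases classify M with rfl | rfl | rfl | rfl | rfl
      · rw [inf_bot_eq]; exact Or.inl rfl
      · rw [P01_inf_P10]; exact Or.inr (Or.inl ⟨rfl, rfl⟩)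
      · rw [inf_idem]; exact Or.inl rfl
      · rw [P01_inf_Δ']; exact Or.inr (Or.inr (Or.inl ⟨rfl, rfl⟩))
      · rw [inf_top_eq]; exact Or.inr (Or.inr (Or.inr ⟨rfl, rfl⟩))

lemma isTS_T2 : IsTS T2 := by
  refine ⟨?_, ?_, ?_, ?_⟩
  · intro K r hr _ _ _ _; exact hr.1 K
  · intro K L M h1 h2 r hr a b c d
    exact hr.2.1 K L M (h1 r hr a b c d) (h2 r hr a b c d)
  · intro K L h
    exact h (fun K L => K ≤ L)
      ⟨fun K => le_rfl, fun _ _ _ => le_trans, fun _ _ h => h,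
        fun K L M h => inf_le_inf_right M h⟩ bot_le bot_le bot_le le_top
  · intro K L M h r hr a b c d
    exact hr.2.2.2 K L M (h r hr a b c d)

def Rbad : AddSubgroup V4 → AddSubgroup V4 → Prop := fun K H =>
  K = H ∨ K = ⊥ ∨ (K = P01 ∧ H = ⊤)

lemma isTS_Rbad : IsTS Rbad := by
  refine ⟨fun K => Or.inl rfl, ?_, ?_, ?_⟩
  · intro K L M h1 h2
    rcases h1 with rfl | rfl | ⟨rfl, rfl⟩
    · exact h2
    · exact Or.inr (Or.inl rfl)
    · rcases h2 with rfl | h | ⟨h, rfl⟩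
      · exact Or.inr (Or.inr ⟨rfl, rfl⟩)
      · exact absurd h top_ne_bot'
      · exact absurd h (fun hh => P01_ne_top hh.symm)
  · intro K L h
    rcases h with rfl | rfl | ⟨rfl, rfl⟩
    exacts [le_rfl, bot_le, le_top]
  · intro K L M h
    rcases h with rfl | rfl | ⟨rfl, rfl⟩
    · exact Or.inl rfl
    · exact Or.inr (Or.inl (bot_inf_eq M))
    · rw [top_inf_eq]
      rcases classify M with rfl | rfl | rfl | rfl | rfl
      · exact Or.inr (Or.inl (by simp))
      · exact Or.inr (Or.inl P01_inf_P10)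
      · exact Or.inl (inf_idem _)
      · exact Or.inr (Or.inl P01_inf_Δ')
      · exact Or.inr (Or.inr ⟨by simp, rfl⟩)

/-- The pair `(T₁, T₂)` on `C₂ × C₂` fails compatibility: with `A = C₂×C₂`, `B = e×C₂`,
`C = Δ`, one has `B ≤_{T₁} A` and `B ∩ C = e ≤_{T₂} B`, but `C = Δ` is not `≤_{T₂} A`. -/
theorem stmt14 :
    IsTS T1 ∧ IsTS T2 ∧ (∀ K H, T1 K H → T2 K H) ∧
    T1 P01 ⊤ ∧ P01 ⊓ Δ' = ⊥ ∧ T2 (P01 ⊓ Δ') P01 ∧ ¬ T2 Δ' ⊤ := by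
  refine ⟨isTS_T1, isTS_T2, ?_, ?_, P01_inf_Δ', ?_, ?_⟩
  · intro K H h r hr a b c d
    rcases h with rfl | ⟨rfl, rfl⟩ | ⟨rfl, rfl⟩ | ⟨rfl, rfl⟩
    exacts [hr.1 K, a, c, d]
  · exact Or.inr (Or.inr (Or.inr ⟨rfl, rfl⟩))
  · intro r hr a b c d
    rw [P01_inf_Δ']; exact b
  · intro h
    have := h Rbad isTS_Rbad (Or.inr (Or.inl rfl)) (Or.inr (Or.inl rfl))
      (Or.inr (Or.inl rfl)) (Or.inr (Or.inr ⟨rfl, rfl⟩))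
    rcases this with h1 | h1 | ⟨h1, _⟩
    · exact Δ'_ne_top h1
    · exact Δ'_ne_bot h1
    · exact P01_ne_Δ' h1.symm
end
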